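/- arXiv:1204.3442 — 4 statements merged into one kernel-verified Lean document; each statement's English description precedes it below -/
import Mathlib

section
/- Let K be a field, I ⊆ K[X] an ideal with dim_K(K[X]/I) finite, and h ∈ K[X]. Then dim_K(K[X]/I) = dim_K(K[X]/(I + ⟨h⟩)) + dim_K(K[X]/(I : h)). -/
set_option maxHeartbeats 2000000
set_option synthInstance.maxHeartbeats 400000

/-- Lemma 2.3(2): if `dim_K K[X]/I` is finite and `h ∈ K[X]`, then
`dim_K K[X]/I = dim_K K[X]/(I + ⟨h⟩) + dim_K K[X]/(I : h)`. -/
theorem stmt_1 (K : Type*) [Field K] (n : ℕ)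
    (I : Ideal (MvPolynomial (Fin n) K))
    (hI : FiniteDimensional K (MvPolynomial (Fin n) K ⧸ I))
    (h : MvPolynomial (Fin n) K) :
    Module.finrank K (MvPolynomial (Fin n) K ⧸ I) =
      Module.finrank K (MvPolynomial (Fin n) K ⧸ (I + Ideal.span {h})) +
      Module.finrank K (MvPolynomial (Fin n) K ⧸ (I.colon (Ideal.span {h}))) := by
  set J : Ideal (MvPolynomial (Fin n) K) := Ideal.span {h} with hJ
  -- the image of J in R/I, as a K-submodule
  set S : Submodule K (MvPolynomial (Fin n) K ⧸ I) :=
    (Ideal.map (Ideal.Quotient.mkₐ K I) J).restrictScalars K with hS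
  -- multiplication by h followed by projection
  set f : MvPolynomial (Fin n) K →ₗ[K] MvPolynomial (Fin n) K ⧸ I :=
    (Ideal.Quotient.mkₐ K I).toLinearMap ∘ₗ LinearMap.mulLeft K h with hf
  have hfx : ∀ x, f x = Ideal.Quotient.mk I (h * x) := fun x => rfl
  have hker : LinearMap.ker f = (I.colon J).restrictScalars K := by
    ext x
    rw [LinearMap.mem_ker, hfx, Submodule.restrictScalars_mem, hJ,
      Ideal.mem_colon_span_singleton, Ideal.Quotient.eq_zero_iff_mem, mul_comm]
  have hrange : LinearMap.range f = S := by
    ext y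
    constructor
    · rintro ⟨x, rfl⟩
      rw [hfx]
      exact Ideal.mem_map_of_mem _ (Ideal.mul_mem_right x _ (Ideal.subset_span rfl))
    · intro hy
      have : y ∈ Ideal.map (Ideal.Quotient.mkₐ K I) J := hy
      rw [hJ, Ideal.map_span, Set.image_singleton, Ideal.mem_span_singleton] at this
      obtain ⟨c, hc⟩ := this
      obtain ⟨x, rfl⟩ := Ideal.Quotient.mk_surjective c
      refine ⟨x, ?_⟩
      rw [hfx, hc]
      rfl
  have e1 : (MvPolynomial (Fin n) K ⧸ I.colon J) ≃ₗ[K] S :=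
    (Submodule.Quotient.restrictScalarsEquiv K (I.colon J)).symm.trans
      ((Submodule.quotEquivOfEq _ _ hker.symm) ≪≫ₗ f.quotKerEquivRange ≪≫ₗ
        LinearEquiv.ofEq _ _ hrange)
  have e3 : ((MvPolynomial (Fin n) K ⧸ I) ⧸ Ideal.map (Ideal.Quotient.mkₐ K I) J)
      ≃ₗ[K] MvPolynomial (Fin n) K ⧸ (I + J) := by
    rw [Submodule.add_eq_sup]
    exact (DoubleQuot.quotQuotEquivQuotSupₐ K I J).toLinearEquiv
  have e2 : ((MvPolynomial (Fin n) K ⧸ I) ⧸ S) ≃ₗ[K] MvPolynomial (Fin n) K ⧸ (I + J) :=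
    (Submodule.Quotient.restrictScalarsEquiv K
      (Ideal.map (Ideal.Quotient.mkₐ K I) J)).trans e3
  rw [← Submodule.finrank_quotient_add_finrank S, e2.finrank_eq, e1.symm.finrank_eq]
end

section
/- Let K be a field, I ⊆ K[X] a zero-dimensional ideal, h_1,...,h_l ∈ K[X], and set h_{l+1} = 1. Then dim_K(K[X]/I) = Σ_{i=1}^{l+1} dim_K(K[X]/((I + ⟨h_1,...,h_{i-1}⟩) : h_i)). -/
open Module

private lemma fd_of_le {K R : Type*} [Field K] [CommRing R] [Algebra K R]
    {I J : Ideal R} (hle : I ≤ J) (hfd : FiniteDimensional K (R ⧸ I)) :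
    FiniteDimensional K (R ⧸ J) := by
  have e1 : ((R ⧸ I) ⧸ ((J.map (Ideal.Quotient.mk I)).restrictScalars K)) ≃ₗ[K]
      ((R ⧸ I) ⧸ (J.map (Ideal.Quotient.mk I))) :=
    Submodule.Quotient.restrictScalarsEquiv K _
  have e2 : ((R ⧸ I) ⧸ (J.map (Ideal.Quotient.mkₐ K I))) ≃ₐ[K] R ⧸ I ⊔ J :=
    DoubleQuot.quotQuotEquivQuotSupₐ K I J
  have hsup : I ⊔ J = J := sup_eq_right.mpr hle
  rw [← hsup]
  have hmap : J.map (Ideal.Quotient.mkₐ K I) = J.map (Ideal.Quotient.mk I) := rfl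
  rw [hmap] at e2
  have e3 := e1.trans e2.toLinearEquiv
  exact FiniteDimensional.of_surjective e3.toLinearMap e3.surjective

private lemma key_step {K R : Type*} [Field K] [CommRing R] [Algebra K R]
    (J : Ideal R) (f : R) [FiniteDimensional K (R ⧸ J)] :
    Module.finrank K (R ⧸ J) =
      Module.finrank K (R ⧸ J.colon (Ideal.span {f})) +
      Module.finrank K (R ⧸ (J ⊔ Ideal.span {f})) := by
  classical
  set φ : R →ₗ[K] R ⧸ J :=
    (Ideal.Quotient.mkₐ K J).toLinearMap ∘ₗ LinearMap.mulLeft K f with hφ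
  have hφx : ∀ x : R, φ x = Ideal.Quotient.mk J (f * x) := fun x => rfl
  have hker : LinearMap.ker φ = (J.colon (Ideal.span {f})).restrictScalars K := by
    ext x
    simp only [LinearMap.mem_ker, hφx, Ideal.Quotient.eq_zero_iff_mem,
      Submodule.restrictScalars_mem, Ideal.mem_colon_span_singleton, mul_comm]
  have hrange : LinearMap.range φ =
      ((Ideal.span {f}).map (Ideal.Quotient.mk J)).restrictScalars K := by
    ext y
    rw [Submodule.restrictScalars_mem]
    constructor
    · rintro ⟨x, rfl⟩
      rw [hφx]
      exact Ideal.mem_map_of_mem _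
        (Ideal.mul_mem_right _ _ (Ideal.mem_span_singleton_self f))
    · intro hy
      obtain ⟨x, hx, rfl⟩ :=
        (Ideal.mem_map_iff_of_surjective _ Ideal.Quotient.mk_surjective).mp hy
      obtain ⟨r, rfl⟩ := Ideal.mem_span_singleton'.mp hx
      exact ⟨r, by rw [hφx, mul_comm]⟩
  have h1 : Module.finrank K (R ⧸ J.colon (Ideal.span {f})) =
      Module.finrank K (LinearMap.range φ) := by
    rw [← (Submodule.Quotient.restrictScalarsEquiv K
      (J.colon (Ideal.span {f}))).finrank_eq, ← hker]
    exact φ.quotKerEquivRange.finrank_eq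
  have h2 : Module.finrank K (R ⧸ (J ⊔ Ideal.span {f})) =
      Module.finrank K ((R ⧸ J) ⧸ LinearMap.range φ) := by
    have e2 : ((R ⧸ J) ⧸ ((Ideal.span {f}).map (Ideal.Quotient.mkₐ K J))) ≃ₐ[K]
        R ⧸ J ⊔ Ideal.span {f} := DoubleQuot.quotQuotEquivQuotSupₐ K J (Ideal.span {f})
    have e1 : ((R ⧸ J) ⧸ (((Ideal.span {f}).map (Ideal.Quotient.mk J)).restrictScalars K))
        ≃ₗ[K] ((R ⧸ J) ⧸ ((Ideal.span {f}).map (Ideal.Quotient.mk J))) :=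
      Submodule.Quotient.restrictScalarsEquiv K _
    have hmap : (Ideal.span {f}).map (Ideal.Quotient.mkₐ K J)
        = (Ideal.span {f}).map (Ideal.Quotient.mk J) := rfl
    rw [hmap] at e2
    rw [← e2.toLinearEquiv.finrank_eq, ← e1.finrank_eq, hrange]
  have := Submodule.finrank_quotient_add_finrank (LinearMap.range φ)
  rw [h1, h2]
  omega

/-- For a zero-dimensional ideal `I ⊆ K[X]`, `h_1,…,h_l ∈ K[X]` and `h_{l+1} = 1`:
`dim_K K[X]/I = Σ_{i=1}^{l+1} dim_K K[X]/((I + ⟨h_1,…,h_{i-1}⟩) : h_i)`;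
since `h_{l+1} = 1`, the last summand is `dim_K K[X]/(I + ⟨h_1,…,h_l⟩)`. -/
theorem stmt_5 (K : Type*) [Field K] (n : ℕ) (l : ℕ)
    (I : Ideal (MvPolynomial (Fin n) K))
    (hI : FiniteDimensional K (MvPolynomial (Fin n) K ⧸ I))
    (h : Fin l → MvPolynomial (Fin n) K) :
    Module.finrank K (MvPolynomial (Fin n) K ⧸ I) =
      (∑ i : Fin l,
        Module.finrank K (MvPolynomial (Fin n) K ⧸
          ((I + Ideal.span (h '' {j : Fin l | j < i})).colon (Ideal.span {h i})))) +
      Module.finrank K (MvPolynomial (Fin n) K ⧸ (I + Ideal.span (Set.range h))) := by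
  classical
  have main : ∀ k, k ≤ l →
      Module.finrank K (MvPolynomial (Fin n) K ⧸ I) =
        (∑ i ∈ Finset.univ.filter (fun i : Fin l => (i : ℕ) < k),
          Module.finrank K (MvPolynomial (Fin n) K ⧸
            ((I + Ideal.span (h '' {j : Fin l | j < i})).colon (Ideal.span {h i})))) +
        Module.finrank K (MvPolynomial (Fin n) K ⧸
          (I + Ideal.span (h '' {j : Fin l | (j : ℕ) < k}))) := by
    intro k
    induction k with
    | zero =>
      intro _
      have hs : {j : Fin l | (j : ℕ) < 0} = (∅ : Set (Fin l)) := by simp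
      rw [hs, Set.image_empty, Ideal.span_empty]
      simp only [Submodule.add_eq_sup]
      change _ = _ + Module.finrank K (MvPolynomial (Fin n) K ⧸ (I ⊔ ⊥))
      rw [sup_bot_eq]
      simp
    | succ k ih =>
      intro hk
      have hkl : k < l := hk
      have ih' := ih hkl.le
      set i0 : Fin l := ⟨k, hkl⟩ with hi0
      have hset : {j : Fin l | (j : ℕ) < k + 1} = insert i0 {j : Fin l | (j : ℕ) < k} := by
        ext j
        simp only [Set.mem_setOf_eq, Set.mem_insert_iff, Fin.ext_iff, hi0,
          Nat.lt_succ_iff_lt_or_eq]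
        tauto
      have hseteq : {j : Fin l | j < i0} = {j : Fin l | (j : ℕ) < k} := by
        ext j; simp [Fin.lt_def, hi0]
      have hJ : I + Ideal.span (h '' {j : Fin l | (j : ℕ) < k + 1}) =
          (I + Ideal.span (h '' {j : Fin l | (j : ℕ) < k})) ⊔ Ideal.span {h i0} := by
        rw [hset, Set.image_insert_eq, Ideal.span_insert]
        simp only [Submodule.add_eq_sup]
        rw [sup_comm (Ideal.span {h i0}), ← sup_assoc]
      have fd : FiniteDimensional K
          (MvPolynomial (Fin n) K ⧸ (I + Ideal.span (h '' {j : Fin l | (j : ℕ) < k}))) :=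
        fd_of_le (by simp only [Submodule.add_eq_sup]; exact le_sup_left) hI
      have hkey := key_step (K := K)
        (I + Ideal.span (h '' {j : Fin l | (j : ℕ) < k})) (h i0)
      have hfilter : Finset.univ.filter (fun i : Fin l => (i : ℕ) < k + 1)
          = insert i0 (Finset.univ.filter fun i : Fin l => (i : ℕ) < k) := by
        ext j
        simp only [Finset.mem_filter, Finset.mem_univ, true_and, Finset.mem_insert,
          Fin.ext_iff, hi0, Nat.lt_succ_iff_lt_or_eq]
        tauto
      rw [hfilter, Finset.sum_insert (by simp [hi0]), hJ, ih', hkey, hseteq]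
      omega
  have hfin := main l le_rfl
  have h1 : Finset.univ.filter (fun i : Fin l => (i : ℕ) < l) = Finset.univ := by
    ext j; simp [j.is_lt]
  have h2 : {j : Fin l | (j : ℕ) < l} = Set.univ := by
    ext j; simp [j.is_lt]
  rw [h1, h2, Set.image_univ] at hfin
  exact hfin
end

section
/- In Q[x_1,x_2], let G = ⟨x_2^10, x_1·x_2^3 + x_2^5, x_1^11⟩, F_1 = ⟨x_2^7, x_1 + x_2^2⟩, F_2 = ⟨x_2^3, x_1^11⟩. Then G ⊆ F_1 ∩ F_2 and G ≠ F_1 ∩ F_2. -/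
open MvPolynomial

noncomputable def phi10 : MvPolynomial (Fin 2) ℚ →+* Polynomial ℚ ⧸ Ideal.span {(Polynomial.X : Polynomial ℚ) ^ 10} :=
  (Ideal.Quotient.mk _).comp
    (MvPolynomial.aeval ![-(Polynomial.X : Polynomial ℚ) ^ 2, Polynomial.X]).toRingHom

lemma X7_not_mem_span10 :
    (Polynomial.X : Polynomial ℚ) ^ 7 ∉ Ideal.span {(Polynomial.X : Polynomial ℚ) ^ 10} := by
  rw [Ideal.mem_span_singleton]
  intro h
  have h7 : ((Polynomial.X : Polynomial ℚ) ^ 7) ≠ 0 := pow_ne_zero _ Polynomial.X_ne_zero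
  have := Polynomial.natDegree_le_of_dvd h h7
  simp [Polynomial.natDegree_X_pow] at this

/-- In `ℚ[x_1,x_2]` (with `x_1 = X 0`, `x_2 = X 1`), for
`G = ⟨x_2^10, x_1 x_2^3 + x_2^5, x_1^11⟩`, `F_1 = ⟨x_2^7, x_1 + x_2^2⟩`,
`F_2 = ⟨x_2^3, x_1^11⟩` one has `G ⊆ F_1 ∩ F_2` and `G ≠ F_1 ∩ F_2`. -/
theorem stmt_10 :
    Ideal.span {(X 1 : MvPolynomial (Fin 2) ℚ) ^ 10, X 0 * X 1 ^ 3 + X 1 ^ 5, X 0 ^ 11} ≤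
        Ideal.span {(X 1 : MvPolynomial (Fin 2) ℚ) ^ 7, X 0 + X 1 ^ 2} ⊓
          Ideal.span {(X 1 : MvPolynomial (Fin 2) ℚ) ^ 3, X 0 ^ 11} ∧
      Ideal.span {(X 1 : MvPolynomial (Fin 2) ℚ) ^ 10, X 0 * X 1 ^ 3 + X 1 ^ 5, X 0 ^ 11} ≠
        Ideal.span {(X 1 : MvPolynomial (Fin 2) ℚ) ^ 7, X 0 + X 1 ^ 2} ⊓
          Ideal.span {(X 1 : MvPolynomial (Fin 2) ℚ) ^ 3, X 0 ^ 11} := by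
  constructor
  · rw [Ideal.span_le]
    rintro p hp
    simp only [Set.mem_insert_iff, Set.mem_singleton_iff] at hp
    rcases hp with rfl | rfl | rfl
    · constructor
      · rw [SetLike.mem_coe, Ideal.mem_span_pair]
        exact ⟨X 1 ^ 3, 0, by ring⟩
      · rw [SetLike.mem_coe, Ideal.mem_span_pair]
        exact ⟨X 1 ^ 7, 0, by ring⟩
    · constructor
      · rw [SetLike.mem_coe, Ideal.mem_span_pair]
        exact ⟨0, X 1 ^ 3, by ring⟩
      · rw [SetLike.mem_coe, Ideal.mem_span_pair]
        exact ⟨X 0 + X 1 ^ 2, 0, by ring⟩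
    · constructor
      · obtain ⟨c, hc⟩ := sub_dvd_pow_sub_pow (X 0 : MvPolynomial (Fin 2) ℚ) (-(X 1 ^ 2)) 11
        rw [SetLike.mem_coe, Ideal.mem_span_pair]
        exact ⟨-(X 1 ^ 15), c, by linear_combination -hc⟩
      · rw [SetLike.mem_coe, Ideal.mem_span_pair]
        exact ⟨0, 1, by ring⟩
  · intro h
    have hmem : (X 1 : MvPolynomial (Fin 2) ℚ) ^ 7 ∈
        Ideal.span {(X 1 : MvPolynomial (Fin 2) ℚ) ^ 10, X 0 * X 1 ^ 3 + X 1 ^ 5, X 0 ^ 11} := by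
      rw [h]
      constructor
      · exact Ideal.subset_span (by simp)
      · rw [SetLike.mem_coe, Ideal.mem_span_pair]
        exact ⟨X 1 ^ 4, 0, by ring⟩
    -- apply phi10
    have hker : Ideal.span {(X 1 : MvPolynomial (Fin 2) ℚ) ^ 10, X 0 * X 1 ^ 3 + X 1 ^ 5, X 0 ^ 11}
        ≤ RingHom.ker phi10 := by
      rw [Ideal.span_le]
      rintro p hp
      simp only [Set.mem_insert_iff, Set.mem_singleton_iff] at hp
      rw [SetLike.mem_coe, RingHom.mem_ker]
      rcases hp with rfl | rfl | rfl
      · show Ideal.Quotient.mk _ ((MvPolynomial.aeval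
            ![-(Polynomial.X : Polynomial ℚ) ^ 2, Polynomial.X]) (X 1 ^ 10)) = 0
        rw [Ideal.Quotient.eq_zero_iff_mem]
        have : (MvPolynomial.aeval ![-(Polynomial.X : Polynomial ℚ) ^ 2, Polynomial.X])
            ((X 1 : MvPolynomial (Fin 2) ℚ) ^ 10) = Polynomial.X ^ 10 := by
          simp
        rw [this]
        exact Ideal.subset_span rfl
      · show Ideal.Quotient.mk _ ((MvPolynomial.aeval
            ![-(Polynomial.X : Polynomial ℚ) ^ 2, Polynomial.X]) (X 0 * X 1 ^ 3 + X 1 ^ 5)) = 0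
        have : (MvPolynomial.aeval ![-(Polynomial.X : Polynomial ℚ) ^ 2, Polynomial.X])
            ((X 0 : MvPolynomial (Fin 2) ℚ) * X 1 ^ 3 + X 1 ^ 5) = 0 := by
          simp only [map_add, map_mul, map_pow, aeval_X, Matrix.cons_val_zero,
            Matrix.cons_val_one, Matrix.head_cons]
          ring
        rw [this, map_zero]
      · show Ideal.Quotient.mk _ ((MvPolynomial.aeval
            ![-(Polynomial.X : Polynomial ℚ) ^ 2, Polynomial.X]) (X 0 ^ 11)) = 0
        rw [Ideal.Quotient.eq_zero_iff_mem]
        have : (MvPolynomial.aeval ![-(Polynomial.X : Polynomial ℚ) ^ 2, Polynomial.X])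
            ((X 0 : MvPolynomial (Fin 2) ℚ) ^ 11) =
            Polynomial.X ^ 12 * -Polynomial.X ^ 10 := by
          simp only [map_pow, aeval_X, Matrix.cons_val_zero]
          ring
        rw [this]
        exact Ideal.mul_mem_left _ _ (neg_mem (Ideal.subset_span rfl))
    have h0 := hker hmem
    rw [RingHom.mem_ker] at h0
    have heq : phi10 ((X 1 : MvPolynomial (Fin 2) ℚ) ^ 7) =
        Ideal.Quotient.mk _ ((Polynomial.X : Polynomial ℚ) ^ 7) := by
      show Ideal.Quotient.mk _ ((MvPolynomial.aeval
          ![-(Polynomial.X : Polynomial ℚ) ^ 2, Polynomial.X]) (X 1 ^ 7)) = _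
      simp
    rw [heq, Ideal.Quotient.eq_zero_iff_mem] at h0
    exact X7_not_mem_span10 h0
end

section
/- Let K be a field and m ⊆ K[x_1,...,x_n] a maximal ideal. Then for the lexicographical ordering x_1 > ... > x_n, a minimal Gröbner basis G of m is a triangular set: it consists of n polynomials f_1,...,f_n with leading term of f_i equal to x_{n-i+1}^{α_i} for some α_i > 0. -/
open MvPolynomial

/-- The leading monomial (multidegree) of a multivariate polynomial with respect to the
lexicographical ordering in which `x_1 = X 0 > x_2 = X 1 > … > x_n = X (n-1)`. -/
noncomputable def leadingMonomial {K : Type*} [Field K] {n : ℕ}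
    (f : MvPolynomial (Fin n) K) : Fin n →₀ ℕ :=
  ofLex (f.support.sup fun d => toLex d)

/-- `G` is a Gröbner basis of `I` (w.r.t. the lex ordering above): `G ⊆ I` and the leading
monomial of every nonzero element of `I` is divisible by the leading monomial of some
element of `G`. -/
def IsGroebnerBasis {K : Type*} [Field K] {n : ℕ}
    (I : Ideal (MvPolynomial (Fin n) K)) (G : Finset (MvPolynomial (Fin n) K)) : Prop :=
  ↑G ⊆ (I : Set (MvPolynomial (Fin n) K)) ∧
    ∀ f ∈ I, f ≠ 0 → ∃ g ∈ G, g ≠ 0 ∧ leadingMonomial g ≤ leadingMonomial f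

/-- A minimal Gröbner basis: a Gröbner basis consisting of monic polynomials such that
no leading monomial of one element divides the leading monomial of another. -/
def IsMinimalGroebnerBasis {K : Type*} [Field K] {n : ℕ}
    (I : Ideal (MvPolynomial (Fin n) K)) (G : Finset (MvPolynomial (Fin n) K)) : Prop :=
  IsGroebnerBasis I G ∧ (∀ g ∈ G, g ≠ 0 ∧ coeff (leadingMonomial g) g = 1) ∧
    ∀ g ∈ G, ∀ g' ∈ G, g ≠ g' → ¬ leadingMonomial g ≤ leadingMonomial g'



set_option synthInstance.maxHeartbeats 1000000
set_option maxHeartbeats 1000000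
set_option linter.unusedVariables false

section Aux
variable {K : Type*} [Field K] {n : ℕ}

theorem toLex_le_LM {f : MvPolynomial (Fin n) K} {d : Fin n →₀ ℕ} (hd : d ∈ f.support) :
    toLex d ≤ toLex (leadingMonomial f) :=
  Finset.le_sup (f := fun d => toLex d) hd

theorem LM_mem_support {f : MvPolynomial (Fin n) K} (hf : f ≠ 0) :
    leadingMonomial f ∈ f.support := by
  obtain ⟨b, hb, he⟩ := Finset.exists_mem_eq_sup f.support
    (Finset.nonempty_iff_ne_empty.mpr (mt MvPolynomial.support_eq_empty.mp hf)) (fun d => toLex d)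
  have : leadingMonomial f = b := by
    simpa [leadingMonomial, he] using rfl
  rwa [this]

theorem coeff_LM_ne_zero {f : MvPolynomial (Fin n) K} (hf : f ≠ 0) :
    coeff (leadingMonomial f) f ≠ 0 :=
  (MvPolynomial.mem_support_iff).mp (LM_mem_support hf)

theorem LM_eq_of {f : MvPolynomial (Fin n) K} {μ : Fin n →₀ ℕ}
    (h1 : coeff μ f ≠ 0) (h2 : ∀ d ∈ f.support, toLex d ≤ toLex μ) :
    leadingMonomial f = μ := by
  have hf : f ≠ 0 := fun h => h1 (by simp [h])
  have := LM_mem_support hf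
  have h3 : toLex (leadingMonomial f) ≤ toLex μ := h2 _ this
  have h4 : toLex μ ≤ toLex (leadingMonomial f) :=
    toLex_le_LM (MvPolynomial.mem_support_iff.mpr h1)
  exact toLex.injective (le_antisymm h3 h4)

theorem lex_pos_of_ne_zero {d : Fin n →₀ ℕ} (hd : d ≠ 0) : toLex (0 : Fin n →₀ ℕ) < toLex d := by
  rw [Finsupp.Lex.lt_iff]
  have hs : d.support.Nonempty := Finsupp.support_nonempty_iff.mpr hd
  refine ⟨d.support.min' hs, fun j hj => ?_, ?_⟩
  · have : j ∉ d.support := fun hm => absurd (d.support.min'_le j hm) (not_le.mpr hj)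
    simpa using (Finsupp.notMem_support_iff.mp this).symm
  · have := d.support.min'_mem hs
    simpa using Nat.pos_of_ne_zero (Finsupp.mem_support_iff.mp this)

-- vanishing below lemma
theorem vanish_below {d μ : Fin n →₀ ℕ} (hle : toLex d ≤ toLex μ)
    {i : Fin n} (hμ : ∀ j, j < i → μ j = 0) : ∀ j, j < i → d j = 0 := by
  by_contra h
  push_neg at h
  obtain ⟨j, hji, hdj⟩ := h
  set s := d.support.filter (· < i) with hs
  have hsne : s.Nonempty := ⟨j, by simp [hs, hji, Finsupp.mem_support_iff.mpr hdj]⟩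
  set k := s.min' hsne with hk
  have hks : k ∈ s := s.min'_mem hsne
  have hki : k < i := (Finset.mem_filter.mp hks).2
  have hdk : d k ≠ 0 := Finsupp.mem_support_iff.mp (Finset.mem_filter.mp hks).1
  have : toLex μ < toLex d := by
    rw [Finsupp.Lex.lt_iff]
    refine ⟨k, fun l hl => ?_, ?_⟩
    · have hli : l < i := lt_trans hl hki
      have : l ∉ s := fun hm => absurd (s.min'_le l hm) (not_le.mpr hl)
      have : d l = 0 := by
        by_contra hdl
        exact this (Finset.mem_filter.mpr ⟨Finsupp.mem_support_iff.mpr hdl, hli⟩)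
      show μ l = d l; simp [this, hμ l hli]
    · show μ k < d k; simpa [hμ k hki] using Nat.pos_of_ne_zero hdk
  exact absurd hle (not_le.mpr this)

theorem lex_single_le {i : Fin n} {a b : ℕ} (h : a ≤ b) :
    toLex (Finsupp.single i a) ≤ toLex (Finsupp.single i b) := by
  rcases eq_or_lt_of_le h with rfl | h
  · exact le_rfl
  · refine le_of_lt ?_
    rw [Finsupp.Lex.lt_iff]
    refine ⟨i, fun j hj => ?_, by simpa⟩
    simp [Finsupp.single_apply, (ne_of_lt hj).symm, hj.ne]

-- lex comparison preserved by subtracting single i a when both have coord i equal a and vanish below i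
theorem lex_sub_single {d μ : Fin n →₀ ℕ} {i : Fin n} {a : ℕ}
    (hd0 : ∀ j, j < i → d j = 0) (hμ0 : ∀ j, j < i → μ j = 0)
    (hda : d i = a) (hμa : μ i = a) (h : toLex d ≤ toLex μ) :
    toLex (d - Finsupp.single i a) ≤ toLex (μ - Finsupp.single i a) := by
  rcases eq_or_lt_of_le h with he | hlt
  · rw [toLex.injective he]
  · refine le_of_lt ?_
    rw [Finsupp.Lex.lt_iff] at hlt ⊢
    obtain ⟨k, hk1, hk2⟩ := hlt
    have hk2' : d k < μ k := hk2
    have hki : i < k := by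
      rcases lt_trichotomy k i with h1 | rfl | h1
      · rw [hd0 k h1, hμ0 k h1] at hk2'; exact absurd hk2' (lt_irrefl 0)
      · rw [hda, hμa] at hk2'; exact absurd hk2' (lt_irrefl a)
      · exact h1
    refine ⟨k, fun l hl => ?_, ?_⟩
    · show (d - Finsupp.single i a) l = (μ - Finsupp.single i a) l
      have := hk1 l hl
      simp only [Finsupp.tsub_apply]
      rw [show d l = μ l from this]
    · show (d - Finsupp.single i a) k < (μ - Finsupp.single i a) k
      simp only [Finsupp.tsub_apply, Finsupp.single_apply, if_neg (ne_of_lt hki)]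
      simpa using hk2'

noncomputable def topCoeff (g : MvPolynomial (Fin n) K) (i : Fin n) (a : ℕ) :
    MvPolynomial (Fin n) K :=
  ∑ d ∈ g.support.filter (fun d => d i = a), monomial (d - Finsupp.single i a) (coeff d g)

noncomputable def restPoly (g : MvPolynomial (Fin n) K) (i : Fin n) (a : ℕ) :
    MvPolynomial (Fin n) K :=
  ∑ d ∈ g.support.filter (fun d => ¬ d i = a), monomial d (coeff d g)

theorem sub_single_inj {i : Fin n} {a : ℕ} {d d' : Fin n →₀ ℕ} (hd : d i = a) (hd' : d' i = a)
    (h : d - Finsupp.single i a = d' - Finsupp.single i a) : d = d' := by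
  have h1 : Finsupp.single i a ≤ d := Finsupp.single_le_iff.mpr (le_of_eq hd.symm)
  have h2 : Finsupp.single i a ≤ d' := Finsupp.single_le_iff.mpr (le_of_eq hd'.symm)
  have := congrArg (· + Finsupp.single i a) h
  simpa [tsub_add_cancel_of_le h1, tsub_add_cancel_of_le h2] using this

theorem coeff_topCoeff (g : MvPolynomial (Fin n) K) (i : Fin n) (a : ℕ)
    {d : Fin n →₀ ℕ} (hd : d i = a) :
    coeff (d - Finsupp.single i a) (topCoeff g i a) = coeff d g := by
  rw [topCoeff, MvPolynomial.coeff_sum]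
  rcases eq_or_ne (coeff d g) 0 with h0 | h0
  · rw [h0, Finset.sum_eq_zero]
    intro d' hd'
    obtain ⟨hd's, hd'i⟩ := Finset.mem_filter.mp hd'
    rw [coeff_monomial, ite_eq_right_iff]
    intro he
    have : d' = d := sub_single_inj hd'i hd he
    subst this
    exact absurd h0 (MvPolynomial.mem_support_iff.mp hd's)
  · rw [Finset.sum_eq_single d]
    · rw [coeff_monomial, if_pos rfl]
    · intro d' hd' hne
      obtain ⟨hd's, hd'i⟩ := Finset.mem_filter.mp hd'
      rw [coeff_monomial, ite_eq_right_iff]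
      intro he
      exact absurd (sub_single_inj hd'i hd he) hne
    · intro hds
      exact absurd (Finset.mem_filter.mpr ⟨MvPolynomial.mem_support_iff.mpr h0, hd⟩) hds

theorem support_topCoeff (g : MvPolynomial (Fin n) K) (i : Fin n) (a : ℕ)
    {e : Fin n →₀ ℕ} (he : e ∈ (topCoeff g i a).support) :
    ∃ d ∈ g.support, d i = a ∧ e = d - Finsupp.single i a := by
  have h := MvPolynomial.mem_support_iff.mp he
  rw [topCoeff, MvPolynomial.coeff_sum] at h
  obtain ⟨d, hd, hne⟩ := Finset.exists_ne_zero_of_sum_ne_zero h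
  obtain ⟨hds, hdi⟩ := Finset.mem_filter.mp hd
  rw [coeff_monomial] at hne
  have : d - Finsupp.single i a = e := by
    by_contra hcon; rw [if_neg hcon] at hne; exact hne rfl
  exact ⟨d, hds, hdi, this.symm⟩

theorem coeff_restPoly (g : MvPolynomial (Fin n) K) (i : Fin n) (a : ℕ) (e : Fin n →₀ ℕ) :
    coeff e (restPoly g i a) = if e i = a then 0 else coeff e g := by
  rw [restPoly, MvPolynomial.coeff_sum]
  split
  · rename_i hia
    apply Finset.sum_eq_zero
    intro d hd
    obtain ⟨hds, hdi⟩ := Finset.mem_filter.mp hd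
    rw [coeff_monomial, ite_eq_right_iff]
    intro he; subst he; exact absurd hia hdi
  · rename_i hia
    rcases eq_or_ne (coeff e g) 0 with h0 | h0
    · rw [h0, Finset.sum_eq_zero]
      intro d hd
      rw [coeff_monomial, ite_eq_right_iff]
      intro he; subst he
      exact absurd h0 (MvPolynomial.mem_support_iff.mp (Finset.mem_filter.mp hd).1)
    · rw [Finset.sum_eq_single e]
      · rw [coeff_monomial, if_pos rfl]
      · intro d hd hne
        rw [coeff_monomial, ite_eq_right_iff]
        intro he; exact absurd he hne
      · intro hes
        exact absurd (Finset.mem_filter.mpr ⟨MvPolynomial.mem_support_iff.mpr h0, hia⟩) hes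

theorem decomp_eq (g : MvPolynomial (Fin n) K) (i : Fin n) (a : ℕ) :
    topCoeff g i a * X i ^ a + restPoly g i a = g := by
  have : topCoeff g i a * X i ^ a
      = ∑ d ∈ g.support.filter (fun d => d i = a), monomial d (coeff d g) := by
    rw [topCoeff, Finset.sum_mul]
    refine Finset.sum_congr rfl fun d hd => ?_
    obtain ⟨hds, hdi⟩ := Finset.mem_filter.mp hd
    rw [X_pow_eq_monomial, monomial_mul, mul_one,
      tsub_add_cancel_of_le (Finsupp.single_le_iff.mpr (le_of_eq hdi.symm))]
  rw [this, restPoly, Finset.sum_filter_add_sum_filter_not]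
  exact support_sum_monomial_coeff g

section Main

variable {g : MvPolynomial (Fin n) K} {i : Fin n}

-- all monomials of g vanish below i, and have i-coord ≤ a := (LM g) i
theorem supp_vanish_below (hgne : g ≠ 0)
    (hbelow : ∀ j, j < i → leadingMonomial g j = 0) (d : Fin n →₀ ℕ) (hd : d ∈ g.support) :
    (∀ j, j < i → d j = 0) ∧ d i ≤ leadingMonomial g i := by
  have h1 := vanish_below (toLex_le_LM hd) hbelow
  refine ⟨h1, ?_⟩
  by_contra hcon
  push_neg at hcon
  have : toLex (leadingMonomial g) < toLex d := by
    rw [Finsupp.Lex.lt_iff]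
    exact ⟨i, fun j hj => by
      show leadingMonomial g j = d j
      rw [hbelow j hj, h1 j hj], hcon⟩
  exact absurd (toLex_le_LM hd) (not_le.mpr this)

-- LM of topCoeff
theorem LM_topCoeff (hgne : g ≠ 0)
    (hbelow : ∀ j, j < i → leadingMonomial g j = 0) :
    leadingMonomial (topCoeff g i (leadingMonomial g i))
      = leadingMonomial g - Finsupp.single i (leadingMonomial g i) ∧
    coeff (leadingMonomial g - Finsupp.single i (leadingMonomial g i))
      (topCoeff g i (leadingMonomial g i)) = coeff (leadingMonomial g) g := by
  set a := leadingMonomial g i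
  set μ := leadingMonomial g
  have hcoeff : coeff (μ - Finsupp.single i a) (topCoeff g i a) = coeff μ g :=
    coeff_topCoeff g i a rfl
  refine ⟨?_, hcoeff⟩
  refine LM_eq_of ?_ ?_
  · rw [hcoeff]
    exact MvPolynomial.mem_support_iff.mp (LM_mem_support hgne)
  · intro e he
    obtain ⟨d, hds, hdi, rfl⟩ := support_topCoeff g i a he
    exact lex_sub_single (supp_vanish_below hgne hbelow d hds).1 hbelow hdi rfl (toLex_le_LM hds)

theorem topCoeff_mem_supported (hgne : g ≠ 0)
    (hbelow : ∀ j, j < i → leadingMonomial g j = 0) :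
    topCoeff g i (leadingMonomial g i) ∈ MvPolynomial.supported K {j | i < j} := by
  rw [MvPolynomial.mem_supported]
  intro j hj
  rw [Finset.mem_coe, MvPolynomial.mem_vars] at hj
  obtain ⟨e, he, hje⟩ := hj
  obtain ⟨d, hds, hdi, rfl⟩ := support_topCoeff g i _ he
  have hjne := Finsupp.mem_support_iff.mp hje
  rw [Finsupp.tsub_apply] at hjne
  show i < j
  rcases lt_trichotomy j i with h1 | rfl | h1
  · rw [(supp_vanish_below hgne hbelow d hds).1 j h1] at hjne; simp at hjne
  · rw [hdi] at hjne; simp at hjne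
  · exact h1

-- the h construction
theorem h_construction {u r : MvPolynomial (Fin n) K} {a : ℕ} (ha : 0 < a)
    (hu : u ∈ MvPolynomial.supported K {j | i < j})
    (hr : ∀ d ∈ r.support, (∀ j, j < i → d j = 0) ∧ d i < a) :
    leadingMonomial (u * r + X i ^ a) = Finsupp.single i a ∧
      coeff (Finsupp.single i a) (u * r + X i ^ a) = 1 ∧ (u * r + X i ^ a) ≠ 0 := by
  classical
  have husupp : ∀ e ∈ u.support, ∀ j, j ≤ i → e j = 0 := by
    intro e he j hji
    by_contra hcon
    have hj : j ∈ u.vars := (MvPolynomial.mem_vars _).mpr ⟨e, he, Finsupp.mem_support_iff.mpr hcon⟩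
    have := (MvPolynomial.mem_supported.mp hu) (Finset.mem_coe.mpr hj)
    exact absurd this (by simpa using hji)
  have hmul : ∀ d ∈ (u * r).support, (∀ j, j < i → d j = 0) ∧ d i < a := by
    intro d hd
    have := MvPolynomial.support_mul u r hd
    rw [Finset.mem_add] at this
    obtain ⟨e, he, d', hd', rfl⟩ := this
    constructor
    · intro j hj
      rw [Finsupp.add_apply, husupp e he j (le_of_lt hj), (hr d' hd').1 j hj]
    · rw [Finsupp.add_apply, husupp e he i le_rfl, zero_add]
      exact (hr d' hd').2
  have hnot : Finsupp.single i a ∉ (u * r).support := by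
    intro hmem
    have := (hmul _ hmem).2
    simp at this
  have hcoeffur : coeff (Finsupp.single i a) (u * r) = 0 :=
    MvPolynomial.notMem_support_iff.mp hnot
  have hcoeff : coeff (Finsupp.single i a) (u * r + X i ^ a) = 1 := by
    rw [MvPolynomial.coeff_add, hcoeffur, zero_add, X_pow_eq_monomial, coeff_monomial, if_pos rfl]
  have hne : (u * r + X i ^ a) ≠ 0 := fun h => by
    rw [h] at hcoeff; simp at hcoeff
  refine ⟨LM_eq_of (by rw [hcoeff]; exact one_ne_zero) ?_, hcoeff, hne⟩
  intro d hd
  have := MvPolynomial.support_add hd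
  rw [Finset.mem_union] at this
  rcases this with h | h
  · have := hmul d h
    refine le_of_lt ?_
    rw [Finsupp.Lex.lt_iff]
    refine ⟨i, fun j hj => ?_, ?_⟩
    · show d j = Finsupp.single i a j
      rw [this.1 j hj, Finsupp.single_apply, if_neg (ne_of_lt hj).symm]
    · show d i < Finsupp.single i a i
      simpa using this.2
  · rw [X_pow_eq_monomial] at h
    have := MvPolynomial.support_monomial_subset h
    rw [Finset.mem_singleton] at this
    rw [this]

end Main

-- Step A: there is an element of m whose LM is a positive pure power of x_i
theorem exists_univ (m : Ideal (MvPolynomial (Fin n) K)) (hm : m.IsMaximal) (i : Fin n) :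
    ∃ q ∈ m, q ≠ 0 ∧ ∃ d : ℕ, 0 < d ∧ leadingMonomial q = Finsupp.single i d := by
  haveI := hm
  haveI : Nontrivial (MvPolynomial (Fin n) K ⧸ m) := Ideal.Quotient.nontrivial_iff.mpr hm.ne_top
  set L := MvPolynomial (Fin n) K ⧸ m
  have hint : RingHom.IsIntegral (RingHom.comp (Ideal.Quotient.mk m) (MvPolynomial.C)) :=
    MvPolynomial.quotient_mk_comp_C_isIntegral_of_isJacobsonRing m
  have hti : IsIntegral K (Ideal.Quotient.mk m (X i) : L) := by
    have := hint (Ideal.Quotient.mk m (X i))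
    exact this
  obtain ⟨p, hpmonic, hproot⟩ := hti
  set q : MvPolynomial (Fin n) K := Polynomial.eval₂ MvPolynomial.C (X i) p with hq
  have hπq : Ideal.Quotient.mk m q = 0 := by
    rw [hq]
    rw [Polynomial.hom_eval₂]
    exact hproot
  have hqm : q ∈ m := (Ideal.Quotient.eq_zero_iff_mem).mp hπq
  -- q as a sum of monomials single i k
  have hqsum : q = ∑ k ∈ Finset.range (p.natDegree + 1),
      monomial (Finsupp.single i k) (p.coeff k) := by
    rw [hq]
    conv_lhs => rw [Polynomial.eval₂_eq_sum_range]
    refine Finset.sum_congr rfl fun k _ => ?_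
    rw [X_pow_eq_monomial, C_mul_monomial, mul_one]
  have hcoeff : ∀ e, coeff (Finsupp.single i e) q = p.coeff e := by
    intro e
    rw [hqsum, MvPolynomial.coeff_sum]
    rcases le_or_gt e p.natDegree with he | he
    · rw [Finset.sum_eq_single e]
      · rw [coeff_monomial, if_pos rfl]
      · intro k _ hk
        rw [coeff_monomial, if_neg]
        exact fun h => hk (Finsupp.single_injective i h)
      · intro he'; exact absurd (Finset.mem_range.mpr (by omega)) he'
    · rw [Polynomial.coeff_eq_zero_of_natDegree_lt he, Finset.sum_eq_zero]
      intro k hk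
      rw [coeff_monomial, if_neg]
      intro h
      have := Finsupp.single_injective i h
      have := Finset.mem_range.mp hk
      omega
  have hsupp : ∀ d ∈ q.support, toLex d ≤ toLex (Finsupp.single i p.natDegree) := by
    intro d hd
    have : coeff d q ≠ 0 := MvPolynomial.mem_support_iff.mp hd
    rw [hqsum, MvPolynomial.coeff_sum] at this
    obtain ⟨k, hk, hne⟩ := Finset.exists_ne_zero_of_sum_ne_zero this
    rw [coeff_monomial] at hne
    have hd' : d = Finsupp.single i k := by
      by_contra h; rw [if_neg (Ne.symm h)] at hne; exact hne rfl
    subst hd'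
    exact lex_single_le (by have := Finset.mem_range.mp hk; omega)
  have hdeg : 0 < p.natDegree := by
    by_contra h
    push_neg at h
    interval_cases hd : p.natDegree
    · have : p = Polynomial.C (p.coeff 0) := Polynomial.eq_C_of_natDegree_eq_zero hd
      have h1 : p.coeff 0 = 1 := by
        have := hpmonic.leadingCoeff
        rwa [Polynomial.leadingCoeff, hd] at this
      rw [this, h1] at hproot
      rw [Polynomial.eval₂_C, map_one] at hproot
      exact one_ne_zero hproot
  have hcq : coeff (Finsupp.single i p.natDegree) q = 1 := by
    rw [hcoeff]
    exact hpmonic.coeff_natDegree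
  have hqne : q ≠ 0 := fun h => by rw [h] at hcq; simp at hcq
  exact ⟨q, hqm, hqne, p.natDegree, hdeg,
    LM_eq_of (by rw [hcq]; exact one_ne_zero) hsupp⟩

theorem invert_mod (m : Ideal (MvPolynomial (Fin n) K)) (hm : m.IsMaximal) (i : Fin n)
    {c : MvPolynomial (Fin n) K} (hc : c ∈ MvPolynomial.supported K {j | i < j})
    (hcm : c ∉ m) :
    ∃ u ∈ MvPolynomial.supported K {j | i < j}, u * c - 1 ∈ m := by
  haveI := hm
  letI : Field (MvPolynomial (Fin n) K ⧸ m) := Ideal.Quotient.field m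
  haveI : Algebra.IsIntegral K (MvPolynomial (Fin n) K ⧸ m) := ⟨fun x =>
    MvPolynomial.quotient_mk_comp_C_isIntegral_of_isJacobsonRing m x⟩
  haveI : Algebra.IsAlgebraic K (MvPolynomial (Fin n) K ⧸ m) := Algebra.IsIntegral.isAlgebraic
  set π : MvPolynomial (Fin n) K →ₐ[K] (MvPolynomial (Fin n) K ⧸ m) := Ideal.Quotient.mkₐ K m
  set F : Subalgebra K (MvPolynomial (Fin n) K ⧸ m) := Subalgebra.map π (MvPolynomial.supported K {j | i < j})
  have hfield : IsField F := Subalgebra.isField_of_algebraic F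
  have hπc : π c ∈ F := Subalgebra.mem_map.mpr ⟨c, hc, rfl⟩
  have hπcne : (⟨π c, hπc⟩ : F) ≠ 0 := by
    intro h
    apply hcm
    have : π c = 0 := congrArg Subtype.val h
    rwa [Ideal.Quotient.mkₐ_eq_mk, Ideal.Quotient.eq_zero_iff_mem] at this
  obtain ⟨y, hy⟩ := hfield.mul_inv_cancel hπcne
  obtain ⟨u, hu, huy⟩ := Subalgebra.mem_map.mp y.2
  refine ⟨u, hu, ?_⟩

  have : π (u * c - 1) = 0 := by
    have h1 : π u * π c = 1 := by
      have h2 : (⟨π c, hπc⟩ : F) * y = 1 := hy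
      have : π c * (y : MvPolynomial (Fin n) K ⧸ m) = 1 := congrArg Subtype.val h2
      rw [← huy] at this
      rw [mul_comm]
      exact this
    rw [map_sub, map_mul, h1, map_one, sub_self]
  rwa [Ideal.Quotient.mkₐ_eq_mk, Ideal.Quotient.eq_zero_iff_mem] at this

-- nonzero elements of a proper ideal have nonzero LM
theorem LM_ne_zero {m : Ideal (MvPolynomial (Fin n) K)} (hm : m ≠ ⊤)
    {g : MvPolynomial (Fin n) K} (hg : g ∈ m) (hgne : g ≠ 0) :
    leadingMonomial g ≠ 0 := by
  intro h0
  have hsupp : g.support ⊆ {0} := by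
    intro d hd
    have := toLex_le_LM hd
    rw [h0] at this
    rcases eq_or_ne d 0 with rfl | hne
    · simp
    · exact absurd this (not_le.mpr (lex_pos_of_ne_zero hne))
  have hgc : g = C (coeff 0 g) := by
    ext e
    rcases eq_or_ne e 0 with rfl | hne
    · simp [coeff_C]
    · rw [MvPolynomial.coeff_C, if_neg (Ne.symm hne)]
      by_contra hc
      exact hne (Finset.mem_singleton.mp (hsupp (MvPolynomial.mem_support_iff.mpr hc)))
  set k := coeff 0 g with hk
  have hc0 : k ≠ 0 := fun h => hgne (by rw [hgc, h, map_zero])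
  apply hm
  rw [Ideal.eq_top_iff_one]
  have : (C k⁻¹ : MvPolynomial (Fin n) K) * g ∈ m := Ideal.mul_mem_left m _ hg
  rwa [hgc, ← map_mul, inv_mul_cancel₀ hc0, map_one] at this

-- every element of a minimal GB of a maximal ideal has pure power leading monomial
theorem pure_power (m : Ideal (MvPolynomial (Fin n) K)) (hm : m.IsMaximal)
    (G : Finset (MvPolynomial (Fin n) K)) (hG : IsMinimalGroebnerBasis m G)
    {g : MvPolynomial (Fin n) K} (hgG : g ∈ G) :
    ∃ i : Fin n, ∃ b : ℕ, 0 < b ∧ leadingMonomial g = Finsupp.single i b := by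
  classical
  obtain ⟨⟨hsub, hGB⟩, hmonic, hmin⟩ := hG
  have hgm : g ∈ m := hsub hgG
  have hgne : g ≠ 0 := (hmonic g hgG).1
  have hμne : leadingMonomial g ≠ 0 := LM_ne_zero hm.ne_top hgm hgne
  have hμs : (leadingMonomial g).support.Nonempty := Finsupp.support_nonempty_iff.mpr hμne
  obtain ⟨i, hi⟩ : ∃ i, i = (leadingMonomial g).support.min' hμs := ⟨_, rfl⟩
  have hbelow : ∀ j, j < i → leadingMonomial g j = 0 := by
    intro j hj
    by_contra hcon
    exact absurd ((leadingMonomial g).support.min'_le j (Finsupp.mem_support_iff.mpr hcon))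
      (not_le.mpr (hi ▸ hj))
  have hapos : 0 < leadingMonomial g i := by
    rw [hi]
    exact Nat.pos_of_ne_zero
      (Finsupp.mem_support_iff.mp ((leadingMonomial g).support.min'_mem hμs))
  refine ⟨i, leadingMonomial g i, hapos, ?_⟩
  by_contra hmix
  obtain ⟨hLMc, hcoeffc⟩ := LM_topCoeff hgne hbelow
  have hcne : topCoeff g i (leadingMonomial g i) ≠ 0 := by
    intro h
    rw [h] at hcoeffc
    simp only [coeff_zero] at hcoeffc
    exact MvPolynomial.mem_support_iff.mp (LM_mem_support hgne) hcoeffc.symm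
  have hcnm : topCoeff g i (leadingMonomial g i) ∉ m := by
    intro hcm
    obtain ⟨g', hg'G, hg'ne, hg'le⟩ := hGB _ hcm hcne
    rw [hLMc] at hg'le
    have hle2 : leadingMonomial g' ≤ leadingMonomial g := le_trans hg'le tsub_le_self
    have hgne' : g' ≠ g := by
      intro h
      subst h
      have := hg'le i
      rw [Finsupp.tsub_apply, Finsupp.single_apply, if_pos rfl] at this
      omega
    exact hmin g' hg'G g hgG hgne' hle2
  obtain ⟨u, hu, hum⟩ := invert_mod m hm i (topCoeff_mem_supported hgne hbelow) hcnm
  have hrprop : ∀ d ∈ (restPoly g i (leadingMonomial g i)).support,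
      (∀ j, j < i → d j = 0) ∧ d i < leadingMonomial g i := by
    intro d hd
    have hcd := MvPolynomial.mem_support_iff.mp hd
    rw [coeff_restPoly] at hcd
    have hdia : d i ≠ leadingMonomial g i := by
      intro h; rw [if_pos h] at hcd; exact hcd rfl
    rw [if_neg hdia] at hcd
    have := supp_vanish_below hgne hbelow d (MvPolynomial.mem_support_iff.mpr hcd)
    exact ⟨this.1, lt_of_le_of_ne this.2 hdia⟩
  obtain ⟨hLMh, hcoeffh, hhne⟩ := h_construction hapos hu hrprop
  have hhm : u * restPoly g i (leadingMonomial g i) + X i ^ (leadingMonomial g i) ∈ m := by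
    have h1 : u * restPoly g i (leadingMonomial g i) + X i ^ (leadingMonomial g i)
        = u * g - (u * topCoeff g i (leadingMonomial g i) - 1) * X i ^ (leadingMonomial g i) := by
      have h2 := decomp_eq g i (leadingMonomial g i)
      generalize hy : (X i : MvPolynomial (Fin n) K) ^ (leadingMonomial g i) = y at h2 ⊢
      generalize hC : topCoeff g i (leadingMonomial g i) = c at h2 ⊢
      generalize hR : restPoly g i (leadingMonomial g i) = r at h2 ⊢
      rw [← h2]
      ring
    rw [h1]
    exact Ideal.sub_mem m (Ideal.mul_mem_left m u hgm) (Ideal.mul_mem_right _ m hum)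
  obtain ⟨g'', hg''G, hg''ne, hg''le⟩ := hGB _ hhm hhne
  rw [hLMh] at hg''le
  have hsuppg'' : ∀ j, j ≠ i → leadingMonomial g'' j = 0 := by
    intro j hj
    have := hg''le j
    rw [Finsupp.single_apply, if_neg (Ne.symm hj)] at this
    omega
  have hbval : leadingMonomial g'' i ≤ leadingMonomial g i := by
    have := hg''le i
    rwa [Finsupp.single_apply, if_pos rfl] at this
  have hg''single : leadingMonomial g'' = Finsupp.single i (leadingMonomial g'' i) := by
    ext j
    rcases eq_or_ne j i with rfl | hj
    · rw [Finsupp.single_apply, if_pos rfl]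
    · rw [hsuppg'' j hj, Finsupp.single_apply, if_neg (Ne.symm hj)]
  have hg''g : g'' ≠ g := by
    intro h
    subst h
    exact hmix hg''single
  apply hmin g'' hg''G g hgG hg''g
  rw [hg''single]
  exact Finsupp.single_le_iff.mpr hbval

end Aux

/-- A minimal Gröbner basis of a maximal ideal `m ⊆ K[x_1,…,x_n]` w.r.t. the lex ordering
`x_1 > … > x_n` is a triangular set: it consists of `n` polynomials `f_1,…,f_n` such that
the leading term of `f_i` is `x_{n-i+1}^{α_i}` for some `α_i > 0` (here `f i` has leading
term `X i.rev ^ α i`, i.e. leading monomial `Finsupp.single i.rev (α i)` and leading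
coefficient `1`). -/

theorem stmt_13 (K : Type*) [Field K] (n : ℕ)
    (m : Ideal (MvPolynomial (Fin n) K)) (hm : m.IsMaximal)
    (G : Finset (MvPolynomial (Fin n) K)) (hG : IsMinimalGroebnerBasis m G) :
    G.card = n ∧
      ∃ (f : Fin n → MvPolynomial (Fin n) K) (α : Fin n → ℕ),
        (∀ i, 0 < α i) ∧ (G : Set (MvPolynomial (Fin n) K)) = Set.range f ∧
          ∀ i, leadingMonomial (f i) = Finsupp.single i.rev (α i) ∧
            coeff (leadingMonomial (f i)) (f i) = 1 := by
  classical
  obtain ⟨⟨hsub, hGB⟩, hmonic, hmin⟩ := hG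
  have hG' : IsMinimalGroebnerBasis m G := ⟨⟨hsub, hGB⟩, hmonic, hmin⟩
  have hex : ∀ i : Fin n, ∃ g, g ∈ G ∧ ∃ b : ℕ, 0 < b ∧ leadingMonomial g = Finsupp.single i b := by
    intro i
    obtain ⟨q, hqm, hqne, d, hd, hLMq⟩ := exists_univ m hm i
    obtain ⟨g, hgG, hgne, hgle⟩ := hGB q hqm hqne
    obtain ⟨i', b, hb, hLMg⟩ := pure_power m hm G hG' hgG
    have : i' = i := by
      by_contra hne
      have := hgle i'
      rw [hLMg, hLMq, Finsupp.single_apply, Finsupp.single_apply,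
        if_pos rfl, if_neg (fun h => hne h.symm)] at this
      omega
    subst this
    exact ⟨g, hgG, b, hb, hLMg⟩
  choose gp hgpG b hbpos hLM using hex
  have huniq : ∀ g ∈ G, ∀ (i : Fin n) (c : ℕ), leadingMonomial g = Finsupp.single i c → g = gp i := by
    intro g hgG i c hLMg
    by_contra hne
    rcases le_total c (b i) with h | h
    · exact hmin g hgG (gp i) (hgpG i) hne
        (by rw [hLMg, hLM i]; exact Finsupp.single_le_iff.mpr (by simp [h]))
    · exact hmin (gp i) (hgpG i) g hgG (Ne.symm hne)
        (by rw [hLMg, hLM i]; exact Finsupp.single_le_iff.mpr (by simp [h]))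
  have hinj : Function.Injective gp := by
    intro i i' h
    by_contra hne
    have h1 := hLM i
    rw [h, hLM i'] at h1
    have h2 := DFunLike.congr_fun h1 i'
    rw [Finsupp.single_apply, Finsupp.single_apply, if_pos rfl,
      if_neg (fun hh : i = i' => hne hh)] at h2
    have := hbpos i'
    omega
  have hGeq : G = Finset.image gp Finset.univ := by
    ext g
    simp only [Finset.mem_image, Finset.mem_univ, true_and]
    constructor
    · intro hgG
      obtain ⟨i, c, hc, hLMg⟩ := pure_power m hm G hG' hgG
      exact ⟨i, (huniq g hgG i c hLMg).symm⟩
    · rintro ⟨i, rfl⟩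
      exact hgpG i
  constructor
  · rw [hGeq, Finset.card_image_of_injective _ hinj, Finset.card_univ, Fintype.card_fin]
  · refine ⟨fun j => gp j.rev, fun j => b j.rev, fun j => hbpos j.rev, ?_, fun j => ?_⟩
    · ext x
      simp only [Finset.coe_image, Set.mem_range]
      constructor
      · intro hx
        obtain ⟨i, c, hc, hLMx⟩ := pure_power m hm G hG' hx
        exact ⟨i.rev, by rw [Fin.rev_rev]; exact (huniq x hx i c hLMx).symm⟩
      · rintro ⟨j, rfl⟩
        exact hgpG j.rev
    · exact ⟨hLM j.rev, (hmonic _ (hgpG j.rev)).2⟩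
end
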